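/- For f(t) = (1+t)^8, there exists θ ∈ ℝ such that E_f(C_θ) < E_f(C_{D_4}). (For example θ with cos θ and sin θ near the values at θ ≈ 2.5294 works; note E_f(C_{D_4}) = 5065.5 while the minimum of E_f(C_θ) is approximately 5064.95.) -/
import Mathlib

open Real

noncomputable def energyC (f : ℝ → ℝ) (θ : ℝ) : ℝ :=
  18 * (f 0 + f (Real.sin (2 * θ)))
    + 36 * (f (Real.sin θ) + f (Real.cos θ))
    + 36 * (f (Real.sin θ ^ 2 - Real.cos θ ^ 2 / 2) + f (Real.cos θ ^ 2 - Real.sin θ ^ 2 / 2))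
    + 72 * (f (-(Real.sin θ / 2)) + f (-(Real.cos θ / 2)) + f (Real.sin (2 * θ) / 4)
        + f (-(Real.sin (2 * θ) / 2)))
    + 84 * f (-(1/2))

noncomputable def energyD4 (f : ℝ → ℝ) : ℝ :=
  24 * f (-1) + 192 * (f (1/2) + f (-(1/2))) + 144 * f 0

theorem stmt2 : ∃ θ : ℝ,
    energyC (fun t => (1 + t) ^ 8) θ < energyD4 (fun t => (1 + t) ^ 8) := by
  refine ⟨Real.arccos (-(325/397)), ?_⟩
  have hc : Real.cos (Real.arccos (-(325/397))) = -(325/397) :=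
    Real.cos_arccos (by norm_num) (by norm_num)
  have hs : Real.sin (Real.arccos (-(325/397))) = 228/397 := by
    rw [Real.sin_arccos, show (1 : ℝ) - (-(325/397))^2 = (228/397)^2 by norm_num]
    exact Real.sqrt_sq (by norm_num)
  simp only [energyC, energyD4, Real.sin_two_mul, hs, hc]
  norm_num
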